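/- (Non-stationary SGD convergence) Let $l_k:\mathbb{R}^d\to\mathbb{R}$, $k\ge 1$, be differentiable with common gradient-Lipschitz constant $L$, satisfying $|l_{k+1}(\theta) - l_k(\theta)| \le \chi_k$ for all $\theta$ and $k$. Let $\theta_{j+1} = \theta_j - \alpha_{j+1} g_{j+1}$ where each $g_{j+1}$ conditioned on $\theta_j$ is an unbiased estimate of $\nabla l_{j+1}(\theta_j)$ with noise bounded by $\rho^2$ almost surely, and $0 < \alpha_j < 2/L$. Then $\min_{j\in\{0,\dots,k\}} \mathbb{E}[\|\nabla l_{j+1}(\theta_j)\|^2] \le \frac{2(l_1(\theta_0) - \mathbb{E}[l_{k+2}(\theta_{k+1})]) + L\rho^2\sum_{j=0}^k \alpha_{j+1}^2 + 2\sum_{j=0}^k \chi_{j+1}}{\sum_{j=0}^k(2\alpha_{j+1} - L\alpha_{j+1}^2)}$. -/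

import Mathlib

open MeasureTheory Finset

local notation "⟪" x ", " y "⟫" => @inner ℝ _ _ x y

/-- Descent lemma for functions with Lipschitz gradient. -/
lemma descent_lemma {E : Type*} [NormedAddCommGroup E] [InnerProductSpace ℝ E]
    [CompleteSpace E] (f : E → ℝ) (g : E → E) (L : ℝ)
    (hgrad : ∀ x, HasGradientAt f (g x) x)
    (hlip : ∀ x y, ‖g x - g y‖ ≤ L * ‖x - y‖) (x y : E) :
    f y ≤ f x + ⟪g x, y - x⟫ + L / 2 * ‖y - x‖ ^ 2 := by
  set v := y - x with hv
  have hgcont : Continuous g := by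
    refine (LipschitzWith.of_dist_le_mul (K := ⟨max L 0, le_max_right _ _⟩) ?_).continuous
    intro a b
    rw [dist_eq_norm, dist_eq_norm]
    exact (hlip a b).trans (mul_le_mul_of_nonneg_right (le_max_left _ _) (norm_nonneg _))
  have hline : ∀ t : ℝ, HasDerivAt (fun t : ℝ => x + t • v) v t := fun t => by
    simpa using ((hasDerivAt_id t).smul_const v).const_add x
  have hderiv : ∀ t : ℝ, HasDerivAt (fun t : ℝ => f (x + t • v)) ⟪g (x + t • v), v⟫ t := by
    intro t
    have h := ((hgrad (x + t • v)).hasFDerivAt.comp_hasDerivAt t (hline t))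
    simpa [InnerProductSpace.toDual_apply_apply, Function.comp_def] using h
  have hcont : Continuous fun t : ℝ => ⟪g (x + t • v), v⟫ :=
    (hgcont.comp (continuous_const.add (continuous_id.smul continuous_const))).inner
      continuous_const
  have heq : f y - f x = ∫ t in (0:ℝ)..1, ⟪g (x + t • v), v⟫ := by
    have := intervalIntegral.integral_eq_sub_of_hasDerivAt (a := 0) (b := 1)
      (f := fun t : ℝ => f (x + t • v)) (f' := fun t : ℝ => ⟪g (x + t • v), v⟫)
      (fun t _ => hderiv t) (hcont.intervalIntegrable 0 1)
    rw [this]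
    simp only [zero_smul, add_zero, one_smul, hv, add_sub_cancel]
  have hbound : ∫ t in (0:ℝ)..1, ⟪g (x + t • v), v⟫
      ≤ ∫ t in (0:ℝ)..1, (⟪g x, v⟫ + (L * ‖v‖ ^ 2) * t) := by
    apply intervalIntegral.integral_mono_on (by norm_num) (hcont.intervalIntegrable 0 1)
      ((continuous_const.add (continuous_const.mul continuous_id')).intervalIntegrable 0 1)
    intro t ht
    rw [Set.mem_Icc] at ht
    have h1 : ⟪g (x + t • v), v⟫ = ⟪g x, v⟫ + ⟪g (x + t • v) - g x, v⟫ := by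
      rw [← inner_add_left, add_sub_cancel]
    rw [h1]
    refine add_le_add le_rfl ?_
    calc ⟪g (x + t • v) - g x, v⟫ ≤ ‖g (x + t • v) - g x‖ * ‖v‖ :=
          real_inner_le_norm _ _
      _ ≤ (L * ‖x + t • v - x‖) * ‖v‖ :=
          mul_le_mul_of_nonneg_right (hlip _ _) (norm_nonneg _)
      _ = (L * ‖v‖ ^ 2) * t := by
          rw [add_sub_cancel_left, norm_smul, Real.norm_eq_abs, abs_of_nonneg ht.1]
          ring
  have hval : ∫ t in (0:ℝ)..1, (⟪g x, v⟫ + (L * ‖v‖ ^ 2) * t)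
      = ⟪g x, v⟫ + L / 2 * ‖v‖ ^ 2 := by
    rw [intervalIntegral.integral_add intervalIntegrable_const
      (by exact (continuous_const.mul continuous_id').intervalIntegrable 0 1 :
        IntervalIntegrable (fun t : ℝ => L * ‖v‖ ^ 2 * t) MeasureTheory.volume 0 1),
      intervalIntegral.integral_const_mul, integral_id, intervalIntegral.integral_const,
      smul_eq_mul]
    ring
  linarith [heq, hbound.trans_eq hval]


lemma condexp_comp_clm {Ω : Type*} {F : MeasurableSpace Ω} {m0 : MeasurableSpace Ω}
    {μ : Measure Ω} [IsFiniteMeasure μ] (hm : F ≤ m0)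
    {E E' : Type*} [NormedAddCommGroup E] [NormedSpace ℝ E] [CompleteSpace E]
    [NormedAddCommGroup E'] [NormedSpace ℝ E'] [CompleteSpace E']
    (T : E →L[ℝ] E') (X : Ω → E) (hX : Integrable X μ) :
    (fun ω => T ((μ[X|F]) ω)) =ᵐ[μ] μ[(fun ω => T (X ω)) | F] := by
  haveI : SigmaFinite (μ.trim hm) := (isFiniteMeasure_trim hm).toSigmaFinite
  refine ae_eq_condExp_of_forall_setIntegral_eq hm (T.integrable_comp hX) ?_ ?_ ?_
  · exact fun s _ _ => (T.integrable_comp integrable_condExp).integrableOn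
  · intro s hs hμs
    rw [T.integral_comp_comm integrable_condExp.integrableOn,
      T.integral_comp_comm hX.integrableOn, setIntegral_condExp hm hX hs]
  · exact MeasureTheory.StronglyMeasurable.aestronglyMeasurable
      (T.continuous.comp_stronglyMeasurable stronglyMeasurable_condExp)

lemma norm_sq_eq_sum {d : ℕ} (x : EuclideanSpace ℝ (Fin d)) :
    ‖x‖ ^ 2 = ∑ i, x i ^ 2 := by
  rw [EuclideanSpace.norm_eq, Real.sq_sqrt (Finset.sum_nonneg fun i _ => sq_nonneg _)]
  simp [Real.norm_eq_abs, sq_abs]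

lemma abs_coord_le {d : ℕ} (x : EuclideanSpace ℝ (Fin d)) (i : Fin d) :
    x i ^ 2 ≤ ‖x‖ ^ 2 := by
  rw [norm_sq_eq_sum]
  exact Finset.single_le_sum (f := fun i => x i ^ 2) (fun j _ => sq_nonneg _) (mem_univ i)

lemma integral_inner_condexp {d : ℕ} {Ω : Type*} {F : MeasurableSpace Ω}
    {m0 : MeasurableSpace Ω} {μ : Measure Ω} [IsProbabilityMeasure μ] (hm : F ≤ m0)
    (h X : Ω → EuclideanSpace ℝ (Fin d))
    (hh : StronglyMeasurable[F] h) (hX : Integrable X μ)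
    (hh2 : Integrable (fun ω => ‖h ω‖ ^ 2) μ) (hX2 : Integrable (fun ω => ‖X ω‖ ^ 2) μ)
    (hcond : μ[X|F] =ᵐ[μ] h) :
    ∫ ω, ⟪h ω, X ω⟫ ∂μ = ∫ ω, ‖h ω‖ ^ 2 ∂μ := by
  have hmeas_h : AEStronglyMeasurable h μ := (hh.mono hm).aestronglyMeasurable
  have hint_coord : ∀ (u v : Ω → EuclideanSpace ℝ (Fin d)),
      AEStronglyMeasurable u μ → AEStronglyMeasurable v μ →
      Integrable (fun ω => ‖u ω‖ ^ 2) μ → Integrable (fun ω => ‖v ω‖ ^ 2) μ →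
      ∀ i, Integrable (fun ω => u ω i * v ω i) μ := by
    intro u v hu hv hu2 hv2 i
    refine Integrable.mono ((hu2.add hv2).div_const 2) ?_ ?_
    · exact ((EuclideanSpace.proj i).continuous.comp_aestronglyMeasurable hu).mul
        ((EuclideanSpace.proj i).continuous.comp_aestronglyMeasurable hv)
    · filter_upwards with ω
      have h1 : |u ω i * v ω i| ≤ (u ω i ^ 2 + v ω i ^ 2) / 2 := by
        nlinarith [sq_nonneg (|u ω i| - |v ω i|), abs_mul (u ω i) (v ω i), sq_abs (u ω i),
          sq_abs (v ω i), abs_nonneg (u ω i * v ω i)]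
      have h2 := abs_coord_le (u ω) i
      have h3 := abs_coord_le (v ω) i
      simp only [Real.norm_eq_abs]
      calc |u ω i * v ω i| ≤ (u ω i ^ 2 + v ω i ^ 2) / 2 := h1
        _ ≤ (‖u ω‖ ^ 2 + ‖v ω‖ ^ 2) / 2 := by gcongr
        _ ≤ |(‖u ω‖ ^ 2 + ‖v ω‖ ^ 2) / 2| := le_abs_self _
  have key : ∀ i, ∫ ω, h ω i * X ω i ∂μ = ∫ ω, h ω i * h ω i ∂μ := by
    intro i
    have hXi : Integrable (fun ω => X ω i) μ := by
      simpa using (EuclideanSpace.proj (𝕜 := ℝ) i).integrable_comp hX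
    have hhi : StronglyMeasurable[F] (fun ω => h ω i) :=
      (EuclideanSpace.proj i).continuous.comp_stronglyMeasurable hh
    have hmul : Integrable (fun ω => h ω i * X ω i) μ :=
      hint_coord h X hmeas_h hX.aestronglyMeasurable hh2 hX2 i
    have hcondi : μ[(fun ω => X ω i) | F] =ᵐ[μ] fun ω => h ω i := by
      have := (condexp_comp_clm hm (EuclideanSpace.proj i) X hX).symm
      refine this.trans ?_
      filter_upwards [hcond] with ω hω
      simp [hω]
    have step1 : ∫ ω, h ω i * X ω i ∂μ = ∫ ω, (μ[(fun ω => h ω i * X ω i) | F]) ω ∂μ :=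
      (integral_condExp hm).symm
    have step2 : μ[(fun ω => h ω i * X ω i) | F] =ᵐ[μ] fun ω => h ω i * (μ[(fun ω => X ω i) | F]) ω := by
      have := condExp_mul_of_stronglyMeasurable_left hhi (μ := μ) ?_ hXi
      · exact this.trans (by filter_upwards with ω using rfl)
      · exact hmul
    rw [step1, integral_congr_ae (step2.trans ?_)]
    filter_upwards [hcondi] with ω hω
    rw [hω]
  have hlhs : ∫ ω, ⟪h ω, X ω⟫ ∂μ = ∑ i, ∫ ω, h ω i * X ω i ∂μ := by
    rw [← integral_finset_sum _ (fun i _ => hint_coord h X hmeas_h hX.aestronglyMeasurable hh2 hX2 i)]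
    refine integral_congr_ae ?_
    filter_upwards with ω
    simp [PiLp.inner_apply, RCLike.inner_apply]
    exact Finset.sum_congr rfl fun i _ => mul_comm _ _
  have hrhs : ∫ ω, ‖h ω‖ ^ 2 ∂μ = ∑ i, ∫ ω, h ω i * h ω i ∂μ := by
    rw [← integral_finset_sum _ (fun i _ => hint_coord h h hmeas_h hmeas_h hh2 hh2 i)]
    refine integral_congr_ae ?_
    filter_upwards with ω
    rw [norm_sq_eq_sum]
    simp [sq]
  rw [hlhs, hrhs]
  exact Finset.sum_congr rfl fun i _ => key i


lemma integrable_inner' {Ω : Type*} {m0 : MeasurableSpace Ω} {μ : MeasureTheory.Measure Ω}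
    {E : Type*} [NormedAddCommGroup E] [InnerProductSpace ℝ E]
    {u v : Ω → E} (hu : AEStronglyMeasurable u μ) (hv : AEStronglyMeasurable v μ)
    (hu2 : Integrable (fun ω => ‖u ω‖ ^ 2) μ) (hv2 : Integrable (fun ω => ‖v ω‖ ^ 2) μ) :
    Integrable (fun ω => ⟪u ω, v ω⟫) μ := by
  refine Integrable.mono ((hu2.add hv2).div_const 2) (hu.inner hv) ?_
  filter_upwards with ω
  have h1 : |⟪u ω, v ω⟫| ≤ ‖u ω‖ * ‖v ω‖ := abs_real_inner_le_norm _ _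
  have h2 : ‖u ω‖ * ‖v ω‖ ≤ (‖u ω‖ ^ 2 + ‖v ω‖ ^ 2) / 2 := by
    nlinarith [sq_nonneg (‖u ω‖ - ‖v ω‖)]
  simp only [Real.norm_eq_abs]
  exact (h1.trans h2).trans (le_abs_self _)

/-- Non-stationary SGD convergence (Theorem 1 of the paper): for losses `l_k`, each
`L`-smooth, with per-step drift `|l_{k+1}(θ) - l_k(θ)| ≤ χ_k`, unbiased stochastic
gradients with noise bounded by `ρ²`, and step sizes `0 < α_j < 2/L`, the minimum
expected squared gradient norm is bounded by `T_1 + T_2 + T_3`. -/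
theorem stmt5 {d : ℕ} {Ω : Type*} [m0 : MeasurableSpace Ω] (μ : Measure Ω)
    [IsProbabilityMeasure μ]
    (l : ℕ → EuclideanSpace ℝ (Fin d) → ℝ)
    (gl : ℕ → EuclideanSpace ℝ (Fin d) → EuclideanSpace ℝ (Fin d)) (L ρ : ℝ) (χ : ℕ → ℝ)
    (hgrad : ∀ m x, HasGradientAt (l m) (gl m x) x)
    (hlip : ∀ m x y, ‖gl m x - gl m y‖ ≤ L * ‖x - y‖)
    (hdrift : ∀ m x, |l (m + 1) x - l m x| ≤ χ m)
    (α : ℕ → ℝ) (hα : ∀ j, 0 < α j ∧ α j < 2 / L)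
    (θ0 : EuclideanSpace ℝ (Fin d))
    (θ g : ℕ → Ω → EuclideanSpace ℝ (Fin d))
    (F : ℕ → MeasurableSpace Ω) (hF : ∀ j, F j ≤ m0)
    (hθ0 : ∀ ω, θ 0 ω = θ0)
    (hiter : ∀ j ω, θ (j + 1) ω = θ j ω - α (j + 1) • g (j + 1) ω)
    (hmeas : ∀ j, StronglyMeasurable[F j] (θ j))
    (hunbiased : ∀ j, μ[g (j + 1)|F j] =ᵐ[μ] fun ω => gl (j + 1) (θ j ω))
    (hnoise : ∀ j, ∀ᵐ ω ∂μ, ‖g (j + 1) ω - gl (j + 1) (θ j ω)‖ ^ 2 ≤ ρ ^ 2)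
    (hintl : ∀ m j, Integrable (fun ω => l m (θ j ω)) μ)
    (hintgl : ∀ m j, Integrable (fun ω => ‖gl m (θ j ω)‖ ^ 2) μ)
    (hintg : ∀ j, Integrable (g j) μ)
    (hintg2 : ∀ j, Integrable (fun ω => ‖g j ω‖ ^ 2) μ)
    (k : ℕ) :
    (Finset.range (k + 1)).inf' (Finset.nonempty_range_iff.mpr k.succ_ne_zero)
        (fun j => ∫ ω, ‖gl (j + 1) (θ j ω)‖ ^ 2 ∂μ)
      ≤ (2 * (l 1 θ0 - ∫ ω, l (k + 2) (θ (k + 1) ω) ∂μ)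
          + L * ρ ^ 2 * (∑ j ∈ Finset.range (k + 1), α (j + 1) ^ 2)
          + 2 * ∑ j ∈ Finset.range (k + 1), χ (j + 1)) /
        (∑ j ∈ Finset.range (k + 1), (2 * α (j + 1) - L * α (j + 1) ^ 2)) := by
  -- Positivity of L
  have hL : 0 < L := by
    by_contra hneg
    push_neg at hneg
    have h1 := (hα 0).1
    have h2 := (hα 0).2
    rcases lt_or_eq_of_le hneg with hlt | heq
    · have : 2 / L < 0 := div_neg_of_pos_of_neg (by norm_num) hlt
      linarith
    · rw [heq] at h2; norm_num at h2; linarith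
  have hglcont : ∀ m, Continuous (gl m) := by
    intro m
    refine (LipschitzWith.of_dist_le_mul (K := ⟨max L 0, le_max_right _ _⟩) ?_).continuous
    intro a b
    rw [dist_eq_norm, dist_eq_norm]
    exact (hlip m a b).trans (mul_le_mul_of_nonneg_right (le_max_left _ _) (norm_nonneg _))
  set G : ℕ → ℝ := fun j => ∫ ω, ‖gl (j + 1) (θ j ω)‖ ^ 2 ∂μ with hG_def
  have hGnonneg : ∀ j, 0 ≤ G j := fun j => integral_nonneg fun ω => sq_nonneg _
  -- the one-step inequality
  have hstep : ∀ j, ∫ ω, l (j + 2) (θ (j + 1) ω) ∂μ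
      ≤ ∫ ω, l (j + 1) (θ j ω) ∂μ - (α (j + 1) - L * α (j + 1) ^ 2 / 2) * G j
        + L * α (j + 1) ^ 2 / 2 * ρ ^ 2 + χ (j + 1) := by
    intro j
    set a := α (j + 1) with ha_def
    have ha : 0 < a := (hα (j + 1)).1
    set h : Ω → EuclideanSpace ℝ (Fin d) := fun ω => gl (j + 1) (θ j ω) with hh_def
    have hhF : StronglyMeasurable[F j] h :=
      (hglcont (j + 1)).comp_stronglyMeasurable (hmeas j)
    have hhm : AEStronglyMeasurable h μ := ((hhF.mono (hF j)).aestronglyMeasurable)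
    have hgm : AEStronglyMeasurable (g (j + 1)) μ := (hintg (j + 1)).aestronglyMeasurable
    have hint_hg : Integrable (fun ω => ⟪h ω, g (j + 1) ω⟫) μ :=
      integrable_inner' hhm hgm (hintgl (j + 1) j) (hintg2 (j + 1))
    have hInner : ∫ ω, ⟪h ω, g (j + 1) ω⟫ ∂μ = G j :=
      integral_inner_condexp (hF j) h (g (j + 1)) hhF (hintg (j + 1)) (hintgl (j + 1) j)
        (hintg2 (j + 1)) (hunbiased j)
    -- second moment of the stochastic gradient
    have hexp : ∀ ω, ‖g (j + 1) ω - h ω‖ ^ 2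
        = ‖g (j + 1) ω‖ ^ 2 - 2 * ⟪h ω, g (j + 1) ω⟫ + ‖h ω‖ ^ 2 := by
      intro ω
      rw [norm_sub_sq_real, real_inner_comm]
    have hdiff2_int : Integrable (fun ω => ‖g (j + 1) ω - h ω‖ ^ 2) μ := by
      refine Integrable.congr (((hintg2 (j + 1)).sub (hint_hg.const_mul 2)).add
        (hintgl (j + 1) j)) ?_
      filter_upwards with ω
      exact (hexp ω).symm
    have hnoise_le : ∫ ω, ‖g (j + 1) ω - h ω‖ ^ 2 ∂μ ≤ ρ ^ 2 := by
      calc ∫ ω, ‖g (j + 1) ω - h ω‖ ^ 2 ∂μ ≤ ∫ _, ρ ^ 2 ∂μ :=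
            integral_mono_ae hdiff2_int (integrable_const _) (hnoise j)
        _ = ρ ^ 2 := by simp
    have hg2 : ∫ ω, ‖g (j + 1) ω‖ ^ 2 ∂μ ≤ G j + ρ ^ 2 := by
      have hsplit : ∫ ω, ‖g (j + 1) ω - h ω‖ ^ 2 ∂μ
          = ∫ ω, ‖g (j + 1) ω‖ ^ 2 ∂μ - 2 * ∫ ω, ⟪h ω, g (j + 1) ω⟫ ∂μ
            + ∫ ω, ‖h ω‖ ^ 2 ∂μ := by
        have hIc : Integrable (fun ω => ‖g (j + 1) ω‖ ^ 2 - 2 * ⟪h ω, g (j + 1) ω⟫) μ :=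
          (hintg2 (j + 1)).sub (hint_hg.const_mul 2)
        calc ∫ ω, ‖g (j + 1) ω - h ω‖ ^ 2 ∂μ
            = ∫ ω, (‖g (j + 1) ω‖ ^ 2 - 2 * ⟪h ω, g (j + 1) ω⟫ + ‖h ω‖ ^ 2) ∂μ :=
              integral_congr_ae (Filter.Eventually.of_forall fun ω => hexp ω)
          _ = ∫ ω, ‖g (j + 1) ω‖ ^ 2 ∂μ - 2 * ∫ ω, ⟪h ω, g (j + 1) ω⟫ ∂μ
              + ∫ ω, ‖h ω‖ ^ 2 ∂μ := by
              rw [integral_add hIc (hintgl (j + 1) j),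
                integral_sub (hintg2 (j + 1)) (hint_hg.const_mul 2), integral_const_mul]
      have hGh : ∫ ω, ‖h ω‖ ^ 2 ∂μ = G j := rfl
      rw [hsplit, hInner, hGh] at hnoise_le
      linarith
    -- pointwise descent inequality
    have hdesc : ∀ ω, l (j + 1) (θ (j + 1) ω)
        ≤ l (j + 1) (θ j ω) - a * ⟪h ω, g (j + 1) ω⟫ + L / 2 * a ^ 2 * ‖g (j + 1) ω‖ ^ 2 := by
      intro ω
      have hd := descent_lemma (l (j + 1)) (gl (j + 1)) L (hgrad (j + 1)) (hlip (j + 1))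
        (θ j ω) (θ (j + 1) ω)
      have hδ : θ (j + 1) ω - θ j ω = -(a • g (j + 1) ω) := by
        rw [hiter j ω]; abel
      rw [hδ, inner_neg_right, real_inner_smul_right, norm_neg, norm_smul] at hd
      have : (‖a‖ * ‖g (j + 1) ω‖) ^ 2 = a ^ 2 * ‖g (j + 1) ω‖ ^ 2 := by
        rw [Real.norm_eq_abs, mul_pow, sq_abs]
      rw [this] at hd
      calc l (j + 1) (θ (j + 1) ω)
          ≤ l (j + 1) (θ j ω) + -(a * ⟪h ω, g (j + 1) ω⟫)
            + L / 2 * (a ^ 2 * ‖g (j + 1) ω‖ ^ 2) := hd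
        _ = l (j + 1) (θ j ω) - a * ⟪h ω, g (j + 1) ω⟫
            + L / 2 * a ^ 2 * ‖g (j + 1) ω‖ ^ 2 := by ring
    -- integrate the descent inequality
    have hINT : ∫ ω, l (j + 1) (θ (j + 1) ω) ∂μ
        ≤ ∫ ω, l (j + 1) (θ j ω) ∂μ - a * ∫ ω, ⟪h ω, g (j + 1) ω⟫ ∂μ
          + L / 2 * a ^ 2 * ∫ ω, ‖g (j + 1) ω‖ ^ 2 ∂μ := by
      have hIa : Integrable (fun ω => l (j + 1) (θ j ω) - a * ⟪h ω, g (j + 1) ω⟫) μ :=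
        (hintl (j + 1) j).sub (hint_hg.const_mul a)
      have hIb : Integrable (fun ω => L / 2 * a ^ 2 * ‖g (j + 1) ω‖ ^ 2) μ :=
        (hintg2 (j + 1)).const_mul _
      have hIab : Integrable (fun ω => l (j + 1) (θ j ω) - a * ⟪h ω, g (j + 1) ω⟫
          + L / 2 * a ^ 2 * ‖g (j + 1) ω‖ ^ 2) μ := hIa.add hIb
      have h1 := integral_mono (hintl (j + 1) (j + 1)) hIab hdesc
      simp only [integral_add hIa hIb, integral_sub (hintl (j + 1) j) (hint_hg.const_mul a),
        integral_const_mul] at h1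
      exact h1
    -- drift
    have hdrift_int : ∫ ω, l (j + 2) (θ (j + 1) ω) ∂μ
        ≤ ∫ ω, l (j + 1) (θ (j + 1) ω) ∂μ + χ (j + 1) := by
      have h1 : ∫ ω, l (j + 2) (θ (j + 1) ω) ∂μ ≤ ∫ ω, (l (j + 1) (θ (j + 1) ω) + χ (j + 1)) ∂μ := by
        refine integral_mono (hintl (j + 2) (j + 1)) ((hintl (j + 1) (j + 1)).add
          (integrable_const _)) fun ω => ?_
        have := (abs_le.mp (hdrift (j + 1) (θ (j + 1) ω))).2
        linarith
      rwa [integral_add (hintl (j + 1) (j + 1)) (integrable_const _), integral_const,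
        probReal_univ, one_smul] at h1
    -- combine
    have hcoef : 0 ≤ L / 2 * a ^ 2 := by positivity
    have hmul := mul_le_mul_of_nonneg_left hg2 hcoef
    rw [hInner] at hINT
    nlinarith [hINT, hdrift_int, hmul]
  -- telescoping
  have htele : ∀ n : ℕ, ∫ ω, l (n + 2) (θ (n + 1) ω) ∂μ
      ≤ ∫ ω, l 1 (θ 0 ω) ∂μ
        - ∑ j ∈ Finset.range (n + 1), (α (j + 1) - L * α (j + 1) ^ 2 / 2) * G j
        + ∑ j ∈ Finset.range (n + 1), (L * α (j + 1) ^ 2 / 2 * ρ ^ 2 + χ (j + 1)) := by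
    intro n
    induction n with
    | zero =>
      have := hstep 0
      simp only [zero_add, Finset.sum_range_one]
      linarith
    | succ n ih =>
      have hs := hstep (n + 1)
      have e2 : n + 1 + 1 = n + 2 := rfl
      have e3 : n + 1 + 2 = n + 3 := rfl
      rw [Finset.sum_range_succ (fun j => (α (j + 1) - L * α (j + 1) ^ 2 / 2) * G j) (n + 1),
        Finset.sum_range_succ (fun j => L * α (j + 1) ^ 2 / 2 * ρ ^ 2 + χ (j + 1)) (n + 1)]
      simp only [e2, e3] at hs ⊢
      linarith
  -- initial value
  have hE0 : ∫ ω, l 1 (θ 0 ω) ∂μ = l 1 θ0 := by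
    have : (fun ω => l 1 (θ 0 ω)) = fun _ => l 1 θ0 := funext fun ω => by rw [hθ0 ω]
    rw [this, integral_const, probReal_univ, one_smul]
  -- positivity of the denominator
  have hc_pos : ∀ j, 0 < 2 * α (j + 1) - L * α (j + 1) ^ 2 := by
    intro j
    have h1 := (hα (j + 1)).1
    have h2 := (hα (j + 1)).2
    have h3 : L * α (j + 1) < 2 := by
      rw [lt_div_iff₀ hL] at h2
      linarith [mul_comm (α (j + 1)) L]
    nlinarith
  set D := ∑ j ∈ Finset.range (k + 1), (2 * α (j + 1) - L * α (j + 1) ^ 2) with hD_def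
  have hD_pos : 0 < D :=
    Finset.sum_pos (fun j _ => hc_pos j) (Finset.nonempty_range_iff.mpr k.succ_ne_zero)
  set M := (Finset.range (k + 1)).inf' (Finset.nonempty_range_iff.mpr k.succ_ne_zero)
    (fun j => ∫ ω, ‖gl (j + 1) (θ j ω)‖ ^ 2 ∂μ) with hM_def
  have hM_le : ∀ j ∈ Finset.range (k + 1), M ≤ G j := fun j hj => Finset.inf'_le _ hj
  -- lower bound the weighted sum
  have hsum_ge : M * (D / 2) ≤ ∑ j ∈ Finset.range (k + 1),
      (α (j + 1) - L * α (j + 1) ^ 2 / 2) * G j := by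
    have h1 : M * (D / 2) = ∑ j ∈ Finset.range (k + 1),
        (α (j + 1) - L * α (j + 1) ^ 2 / 2) * M := by
      rw [hD_def, Finset.sum_div, mul_comm, Finset.sum_mul]
      refine Finset.sum_congr rfl fun j _ => ?_
      ring
    rw [h1]
    refine Finset.sum_le_sum fun j hj => ?_
    have hcj : 0 ≤ α (j + 1) - L * α (j + 1) ^ 2 / 2 := by
      have := hc_pos j; linarith
    exact mul_le_mul_of_nonneg_left (hM_le j hj) hcj
  have hfinal := htele k
  rw [hE0] at hfinal
  -- rearrange sums
  have hsum_split : ∑ j ∈ Finset.range (k + 1), (L * α (j + 1) ^ 2 / 2 * ρ ^ 2 + χ (j + 1))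
      = L * ρ ^ 2 * (∑ j ∈ Finset.range (k + 1), α (j + 1) ^ 2) / 2
        + ∑ j ∈ Finset.range (k + 1), χ (j + 1) := by
    rw [Finset.sum_add_distrib]
    congr 1
    rw [Finset.mul_sum, Finset.sum_div]
    exact Finset.sum_congr rfl fun j _ => by ring
  rw [hsum_split] at hfinal
  rw [le_div_iff₀ hD_pos]
  have hMD : M * (D / 2) * 2 = M * D := by ring
  linarith [hfinal, hsum_ge, hMD]
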